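/- There exists a regular transition system R over the two-letter alphabet {0,1} such that Reach(R) = 0* (in particular Reach(R) is a regular language), and yet Ind_b(R) ≠ Reach(R) for every b ≥ 1. -/

import Mathlib

/-- A regular transition system: an NFA `I` over `Σ` for the initial
configurations and a transducer (an NFA over `Σ × Σ`) `T` for the transitions. -/
structure RTS (Sig QI QT : Type) where
  I : NFA Sig QI
  T : NFA (Sig × Sig) QT

/-- `w ⇝ u`: the equal-length pair `(w,u)`, identified with the zipped word over
`Σ × Σ`, is accepted by the transducer. -/
def RTS.Step {Sig QI QT : Type} (R : RTS Sig QI QT) (w u : List Sig) : Prop :=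
  w.length = u.length ∧ w.zip u ∈ R.T.accepts

/-- `Reach(R)`: configurations reachable from some initial configuration under the
reflexive-transitive closure of `⇝`. -/
def RTS.Reach {Sig QI QT : Type} (R : RTS Sig QI QT) : Set (List Sig) :=
  { w | ∃ u ∈ R.I.accepts, Relation.ReflTransGen R.Step u w }

/-- A `b`-formula (of length `φ.length`) is a word over the alphabet of
`b`-tuples of subsets of `Σ`. -/
abbrev BFormula (Sig : Type) (b : ℕ) := List (Fin b → Set Sig)

/-- `w ⊨ φ` iff `|w| ≠ |φ|`, or `|w| = |φ|` and for every clause `i` there is a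
position `j` with `w[j] ∈ φ[j]_i`. -/
def BSat {Sig : Type} {b : ℕ} (w : List Sig) (φ : BFormula Sig b) : Prop :=
  w.length ≠ φ.length ∨
    ∀ i : Fin b, ∃ (j : ℕ) (h₁ : j < w.length) (h₂ : j < φ.length),
      w.get ⟨j, h₁⟩ ∈ φ.get ⟨j, h₂⟩ i

/-- A set of configurations is inductive if it is closed under `⇝`. -/
def IsInductiveSet {Sig QI QT : Type} (R : RTS Sig QI QT) (S : Set (List Sig)) : Prop :=
  ∀ w ∈ S, ∀ u, R.Step w u → u ∈ S

/-- A `b`-formula is inductive if the set of words satisfying it is inductive. -/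
def IsInductiveBFormula {Sig QI QT : Type} {b : ℕ} (R : RTS Sig QI QT)
    (φ : BFormula Sig b) : Prop :=
  ∀ w u, BSat w φ → R.Step w u → BSat u φ

/-- `u ⇝_b w`: every inductive `b`-formula satisfied by `u` is satisfied by `w`. -/
def BPotReach {Sig QI QT : Type} (b : ℕ) (R : RTS Sig QI QT) (u w : List Sig) : Prop :=
  ∀ φ : BFormula Sig b, IsInductiveBFormula R φ → BSat u φ → BSat w φ

/-- `Ind_b(R) = { w : u ⇝_b w for some initial u }`. -/
def Ind {Sig QI QT : Type} (b : ℕ) (R : RTS Sig QI QT) : Set (List Sig) :=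
  { w | ∃ u ∈ R.I.accepts, BPotReach b R u w }

/-- A set `S` is `b`-bounded if for every length `ℓ` there is a `b`-formula of
length `ℓ` whose satisfying words of length `ℓ` are exactly `S ∩ Σ^ℓ`. -/
def IsBBounded {Sig : Type} (b : ℕ) (S : Set (List Sig)) : Prop :=
  ∀ ℓ : ℕ, ∃ φ : BFormula Sig b, φ.length = ℓ ∧
    ∀ w : List Sig, w.length = ℓ → (w ∈ S ↔ BSat w φ)

/-- The language `0*` over the two-letter alphabet `{0,1}` (encoded as `Bool`,
with `0 = false` and `1 = true`). -/
def Zeros : Set (List Bool) := { w | ∀ a ∈ w, a = false }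

section Aux

lemma evalFrom_cons {α σ : Type} (M : NFA α σ) (S : Set σ) (a : α) (x : List α) :
    M.evalFrom S (a :: x) = M.evalFrom (M.stepSet S a) x := rfl

/-- NFA accepting `0*`. -/
def MI : NFA Bool Unit where
  step := fun _ a => if a then ∅ else {()}
  start := {()}
  accept := {()}

/-- Transducer accepting zipped pairs whose first components contain a `true`. -/
def MT : NFA (Bool × Bool) Bool where
  step := fun s p => {s || p.1}
  start := {false}
  accept := {true}

lemma MI_evalFrom_empty (x : List Bool) : MI.evalFrom ∅ x = ∅ := by
  induction x with
  | nil => rfl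
  | cons a x ih => rw [evalFrom_cons]; simp [ih]

lemma MI_evalFrom (x : List Bool) :
    MI.evalFrom {()} x = if ∀ a ∈ x, a = false then {()} else (∅ : Set Unit) := by
  induction x with
  | nil => simp
  | cons a x ih =>
    cases a with
    | false =>
      have hstep : MI.stepSet {()} false = {()} := by
        ext s; simp [NFA.mem_stepSet, MI]
      rw [evalFrom_cons, hstep]; simpa using ih
    | true =>
      have hstep : MI.stepSet {()} true = ∅ := by
        ext s; simp [NFA.mem_stepSet, MI]
      rw [evalFrom_cons, hstep, MI_evalFrom_empty]
      simp

lemma MI_accepts (x : List Bool) : x ∈ MI.accepts ↔ ∀ a ∈ x, a = false := by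
  constructor
  · rintro ⟨S, _, hS⟩
    by_contra h
    rw [NFA.eval, show MI.start = {()} from rfl, MI_evalFrom, if_neg h] at hS
    exact hS
  · intro h
    refine ⟨(), rfl, ?_⟩
    rw [NFA.eval, show MI.start = {()} from rfl, MI_evalFrom, if_pos h]
    rfl

lemma MT_evalFrom (x : List (Bool × Bool)) : ∀ s : Bool,
    MT.evalFrom {s} x = {x.foldl (fun t p => t || p.1) s} := by
  induction x with
  | nil => intro s; rfl
  | cons p x ih =>
    intro s
    have hstep : MT.stepSet {s} p = {s || p.1} := by
      ext t; simp [NFA.mem_stepSet, MT]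
    rw [evalFrom_cons, hstep, ih (s || p.1), List.foldl_cons]

lemma foldl_or (x : List (Bool × Bool)) : ∀ s : Bool,
    (x.foldl (fun t p => t || p.1) s = true ↔ s = true ∨ ∃ p ∈ x, p.1 = true) := by
  induction x with
  | nil => simp
  | cons p x ih =>
    intro s
    rw [List.foldl_cons, ih]
    cases s <;> cases hp : p.1 <;> simp [hp]

lemma MT_accepts (x : List (Bool × Bool)) : x ∈ MT.accepts ↔ ∃ p ∈ x, p.1 = true := by
  constructor
  · rintro ⟨S, hacc, hS⟩
    rw [NFA.eval, show MT.start = {false} from rfl, MT_evalFrom] at hS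
    have hSacc : S = true := hacc
    rw [hS] at hSacc
    have := (foldl_or x false).mp hSacc
    tauto
  · intro h
    refine ⟨true, rfl, ?_⟩
    rw [NFA.eval, show MT.start = {false} from rfl, MT_evalFrom]
    have : x.foldl (fun t p => t || p.1) false = true := (foldl_or x false).mpr (Or.inr h)
    simp [this]

end Aux

/-- Example `ex:ladder2`: there is an RTS `R` over `{0,1}` with
`Reach(R) = 0*` (a regular language), yet `Ind_b(R) ≠ Reach(R)` for every
`b ≥ 1`. -/
theorem exists_rts_regular_reach_never_attained :
    ∃ (QI QT : Type) (_ : Fintype QI) (_ : Fintype QT) (R : RTS Bool QI QT),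
      R.Reach = Zeros ∧ ∀ b : ℕ, 1 ≤ b → Ind b R ≠ R.Reach := by
  have hReach : (RTS.mk MI MT).Reach = Zeros := by
    ext w
    constructor
    · rintro ⟨u, hu, hstep⟩
      have hu0 : u ∈ Zeros := (MI_accepts u).mp hu
      clear hu
      induction hstep with
      | refl => exact hu0
      | @tail w' u' _ hstep ih =>
        exfalso
        obtain ⟨hlen, hacc⟩ := hstep
        obtain ⟨p, hp, hp1⟩ := (MT_accepts _).mp hacc
        have h1 : p.1 ∈ w' := (List.of_mem_zip hp).1
        have := ih p.1 h1
        rw [hp1] at this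
        exact Bool.true_eq_false.mp this
    · intro hw
      exact ⟨w, (MI_accepts w).mpr hw, Relation.ReflTransGen.refl⟩
  refine ⟨Unit, Bool, inferInstance, inferInstance, ⟨MI, MT⟩, hReach, ?_⟩
  intro b hb hEq
  set ℓ := b + 1 with hℓ
  set ones : List Bool := List.replicate ℓ true with hones
  have hones_not : ones ∉ Zeros := by
    intro h
    have : true = false := h true (by simp [hones, hℓ, List.mem_replicate])
    exact Bool.true_eq_false.mp this
  -- show ones ∈ Ind b R
  have hmem : ones ∈ Ind b (RTS.mk MI MT) := by
    refine ⟨List.replicate ℓ false, (MI_accepts _).mpr (by simp [List.mem_replicate]), ?_⟩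
    intro φ hind hsat
    by_cases hlen : φ.length = ℓ
    swap
    · exact Or.inl (by simp only [hones, List.length_replicate]; omega)
    -- φ has length ℓ
    have hu : ∀ i : Fin b, ∃ (j : ℕ) (h₂ : j < φ.length), false ∈ φ.get ⟨j, h₂⟩ i := by
      rcases hsat with h | h
      · exact absurd (by simp [hlen]) h
      · intro i
        obtain ⟨j, h₁, h₂, hj⟩ := h i
        refine ⟨j, h₂, ?_⟩
        simpa using hj
    -- find a singleton word satisfying φ
    have hsing : ∃ p < ℓ, BSat ((List.replicate ℓ false).set p true) φ := by
      by_contra hno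
      push_neg at hno
      have hfail : ∀ p : Fin ℓ, ∃ i : Fin b,
          ∀ (j : ℕ) (h₂ : j < φ.length),
            ((List.replicate ℓ false).set p true).get
              ⟨j, by simpa [List.length_set] using h₂.trans_le hlen.le⟩ ∉ φ.get ⟨j, h₂⟩ i := by
        intro p
        have := hno p p.2
        rw [BSat] at this
        push_neg at this
        obtain ⟨-, i, hi⟩ := this
        refine ⟨i, fun j h₂ => ?_⟩
        have h₁ : j < ((List.replicate ℓ false).set p true).length := by
          simpa [List.length_set] using h₂.trans_le hlen.le
        exact hi j h₁ h₂
      choose f hf using hfail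
      have hinj : Function.Injective f := by
        intro p q hpq
        by_contra hne
        obtain ⟨j, h₂, hj⟩ := hu (f p)
        have hjℓ : j < ℓ := h₂.trans_le hlen.le
        -- j ≠ p or j ≠ q; wlog both give contradiction unless j equals both
        have key : ∀ r : Fin ℓ, f r = f p → j ≠ (r : ℕ) → False := by
          intro r hr hjr
          have := hf r j h₂
          rw [hr] at this
          apply this
          have : ((List.replicate ℓ false).set r true).get
              ⟨j, by simpa [List.length_set] using hjℓ⟩ = false := by
            simp [List.get_eq_getElem, List.getElem_set, hjℓ, Ne.symm hjr]
          rw [this]; exact hj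
        by_cases hjp : j = (p : ℕ)
        · exact key q hpq.symm (by
            intro h; exact hne (Fin.ext (by omega)))
        · exact key p rfl hjp
      have := Fintype.card_le_of_injective f hinj
      simp [hℓ] at this
    obtain ⟨p, hp, hsatp⟩ := hsing
    -- step from the singleton word to ones
    have hstep : (RTS.mk MI MT).Step ((List.replicate ℓ false).set p true) ones := by
      constructor
      · simp [hones, List.length_set]
      · rw [MT_accepts]
        set v := (List.replicate ℓ false).set p true with hv
        have hvlen : v.length = ℓ := by simp [hv, List.length_set]
        have hplen : p < (v.zip ones).length := by
          simp [List.length_zip, hvlen, hones, hp]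
        refine ⟨(v.zip ones).get ⟨p, hplen⟩, List.get_mem _ _, ?_⟩
        have : (v.zip ones).get ⟨p, hplen⟩ =
            (v.get ⟨p, by omega⟩, ones.get ⟨p, by simp [hones, hp]⟩) := by
          simp [List.get_eq_getElem, List.getElem_zip]
        rw [this]
        simp [hv, List.get_eq_getElem, List.getElem_set, hp]
    exact hind _ _ hsatp hstep
  rw [hEq, hReach] at hmem
  exact hones_not hmem
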